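/- For every β ∈ (0,1] and every y ∈ (0,1], one has exp(−β·(μ + G_N(p) + 1)·ρ^N(1−y)) ≥ e^{−β(μ+1)}·q_p(y)^β ≥ e^{−β(μ+1)}·y^β. (This lower-bounds the variable message of the weaker user's code in the corner-point density evolution, uniformly in the truncation level N.) -/

import Mathlib

open Real Filter

noncomputable def qp (p x : ℝ) : ℝ :=
  (Real.sqrt ((1 - p) ^ 2 + 4 * p * x) - (1 - p)) / (2 * p)

noncomputable def aCoeff (p : ℝ) (i : ℕ) : ℝ :=
  (∑ k ∈ Finset.range i, (Nat.choose (2 * i - 1) k : ℝ) * p ^ k) /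
    (i * (1 + p) ^ (2 * i - 1))

noncomputable def Gpart (p : ℝ) (N : ℕ) : ℝ := ∑ i ∈ Finset.Icc 1 N, aCoeff p i

noncomputable def Sp (p x : ℝ) : ℝ := - Real.log (qp p (1 - x))

noncomputable def rhoN (p μ : ℝ) (N : ℕ) (x : ℝ) : ℝ :=
  (μ + (∑ i ∈ Finset.Icc 1 N, aCoeff p i * x ^ i) + x ^ N) / (μ + Gpart p N + 1)

noncomputable def lamBarN (p μ : ℝ) (N : ℕ) (x : ℝ) : ℝ :=
  Real.exp (-(μ + Gpart p N + 1) * rhoN p μ N (1 - x))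

noncomputable def deSym (p μ : ℝ) (N : ℕ) (x : ℝ) : ℝ :=
  ((1 - p) + p * lamBarN p μ N x) * lamBarN p μ N x

noncomputable def cornerMap (p μ : ℝ) (N : ℕ) (α ε₁ ε₂ : ℝ) (y : ℝ) : ℝ :=
  ((1 - p) + p * Real.exp (-(α * (1 - ε₁)))) *
    Real.exp (-(α * (1 - ε₂)) * rhoN p μ N (1 - y))

namespace Stmt13Aux

open Finset Nat

variable {p : ℝ}

/-! ### Combinatorial part -/

private lemma central_sym (n : ℕ) :
    2 * (∑ j ∈ range (n+1), j * (Nat.centralBinom j * Nat.centralBinom (n - j)))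
      = n * ∑ j ∈ range (n+1), Nat.centralBinom j * Nat.centralBinom (n - j) := by
  have hrefl : ∑ j ∈ range (n+1), j * (Nat.centralBinom j * Nat.centralBinom (n - j))
      = ∑ j ∈ range (n+1), (n - j) * (Nat.centralBinom (n-j) * Nat.centralBinom j) := by
    rw [← Finset.sum_range_reflect (fun j => j * (Nat.centralBinom j * Nat.centralBinom (n - j))) (n+1)]
    apply Finset.sum_congr rfl
    intro j hj
    simp only [mem_range] at hj
    have hji : j ≤ n := by omega
    have : n + 1 - 1 - j = n - j := by omega
    rw [this]
    have : n - (n - j) = j := by omega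
    rw [this]
  rw [two_mul]
  nth_rewrite 2 [hrefl]
  rw [← Finset.sum_add_distrib, Finset.mul_sum]
  apply Finset.sum_congr rfl
  intro j hj
  simp only [mem_range] at hj
  have hji : j ≤ n := by omega
  have h1 : Nat.centralBinom (n-j) * Nat.centralBinom j = Nat.centralBinom j * Nat.centralBinom (n - j) := by ring
  rw [h1, ← Nat.add_mul]
  congr 1
  omega

lemma central_conv (m : ℕ) :
    ∑ j ∈ range (m+1), Nat.centralBinom j * Nat.centralBinom (m - j) = 4 ^ m := by
  induction m with
  | zero => simp [Nat.centralBinom]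
  | succ m ih =>
    have hB : ∑ j ∈ range (m+2), j * (Nat.centralBinom j * Nat.centralBinom (m+1 - j))
        = ∑ i ∈ range (m+1), (2*(2*i+1)) * (Nat.centralBinom i * Nat.centralBinom (m - i)) := by
      rw [Finset.sum_range_succ' (fun j => j * (Nat.centralBinom j * Nat.centralBinom (m+1 - j))) (m+1)]
      simp only [Nat.zero_mul, add_zero]
      apply Finset.sum_congr rfl
      intro i hi
      have h1 : m + 1 - (i+1) = m - i := by omega
      rw [h1, ← mul_assoc (i+1), Nat.succ_mul_centralBinom_succ, mul_assoc]
    have hsym := central_sym (m+1)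
    have hsplit : ∑ i ∈ range (m+1), (2*(2*i+1)) * (Nat.centralBinom i * Nat.centralBinom (m - i))
        = 4 * (∑ i ∈ range (m+1), i * (Nat.centralBinom i * Nat.centralBinom (m - i)))
          + 2 * ∑ i ∈ range (m+1), Nat.centralBinom i * Nat.centralBinom (m - i) := by
      rw [Finset.mul_sum, Finset.mul_sum, ← Finset.sum_add_distrib]
      apply Finset.sum_congr rfl
      intro i _
      ring
    have hsm := central_sym m
    have key : (m+1) * (∑ j ∈ range (m+2), Nat.centralBinom j * Nat.centralBinom (m+1 - j))
        = (m+1) * (4 * 4 ^ m) := by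
      rw [ih] at hsm
      rw [← hsym, hB, hsplit, ih]
      have hr : 2 * (4 * (∑ i ∈ range (m+1), i * (Nat.centralBinom i * Nat.centralBinom (m - i))) + 2 * 4 ^ m)
          = 4 * (2 * (∑ i ∈ range (m+1), i * (Nat.centralBinom i * Nat.centralBinom (m - i)))) + 4 * 4 ^ m := by ring
      rw [hr, hsm]
      ring
    have := Nat.eq_of_mul_eq_mul_left (by omega : 0 < m + 1) key
    rw [this, pow_succ]
    ring

private lemma sum_triangle (F : ℕ → ℕ → ℝ) (L : ℕ) :
    ∑ m ∈ range L, ∑ j ∈ range (m+1), F j (m - j)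
      = ∑ j ∈ range L, ∑ k ∈ range (L - j), F j k := by
  induction L with
  | zero => simp
  | succ L ih =>
    rw [Finset.sum_range_succ, ih, Finset.sum_range_succ (fun j => ∑ k ∈ range (L+1-j), F j k)]
    have h1 : ∑ j ∈ range L, ∑ k ∈ range (L+1-j), F j k
        = ∑ j ∈ range L, ((∑ k ∈ range (L-j), F j k) + F j (L - j)) := by
      apply Finset.sum_congr rfl
      intro j hj
      simp only [mem_range] at hj
      have : L + 1 - j = (L - j) + 1 := by omega
      rw [this, Finset.sum_range_succ]
    rw [h1, Finset.sum_add_distrib]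
    have h2 : ∑ j ∈ range (L+1), F j (L - j) = (∑ j ∈ range L, F j (L - j)) + F L 0 := by
      rw [Finset.sum_range_succ, Nat.sub_self]
    rw [h2]
    have h3 : L + 1 - L = 1 := by omega
    rw [h3]
    simp [Finset.sum_range_one]
    ring

lemma centralBinom_partial_le (z : ℝ) (hz : 0 ≤ z) (hz4 : 4 * z < 1) (M : ℕ) :
    ∑ m ∈ range M, (Nat.centralBinom m : ℝ) * z ^ m ≤ 1 / Real.sqrt (1 - 4*z) := by
  set T := ∑ m ∈ range M, (Nat.centralBinom m : ℝ) * z ^ m with hT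
  have hterm : ∀ m : ℕ, 0 ≤ (Nat.centralBinom m : ℝ) * z ^ m := fun m =>
    mul_nonneg (Nat.cast_nonneg _) (pow_nonneg hz m)
  have hTnn : 0 ≤ T := Finset.sum_nonneg fun m _ => hterm m
  have h1r : 0 < 1 - 4*z := by linarith
  have hsq : T ^ 2 ≤ 1 / (1 - 4*z) := by
    have e1 : T ^ 2 = ∑ j ∈ range M, ∑ k ∈ range M,
        ((Nat.centralBinom j : ℝ) * z ^ j) * ((Nat.centralBinom k : ℝ) * z ^ k) := by
      rw [sq, Finset.sum_mul_sum]
    have e2 : T ^ 2 ≤ ∑ j ∈ range (2*M), ∑ k ∈ range (2*M - j),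
        ((Nat.centralBinom j : ℝ) * z ^ j) * ((Nat.centralBinom k : ℝ) * z ^ k) := by
      rw [e1]
      have step1 : ∀ j ∈ range M, ∑ k ∈ range M,
          ((Nat.centralBinom j : ℝ) * z ^ j) * ((Nat.centralBinom k : ℝ) * z ^ k)
          ≤ ∑ k ∈ range (2*M - j),
          ((Nat.centralBinom j : ℝ) * z ^ j) * ((Nat.centralBinom k : ℝ) * z ^ k) := by
        intro j hj
        simp only [mem_range] at hj
        apply Finset.sum_le_sum_of_subset_of_nonneg
        · exact Finset.range_subset_range.2 (by omega)
        · intro k _ _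
          exact mul_nonneg (hterm j) (hterm k)
      calc ∑ j ∈ range M, ∑ k ∈ range M,
          ((Nat.centralBinom j : ℝ) * z ^ j) * ((Nat.centralBinom k : ℝ) * z ^ k)
          ≤ ∑ j ∈ range M, ∑ k ∈ range (2*M - j),
          ((Nat.centralBinom j : ℝ) * z ^ j) * ((Nat.centralBinom k : ℝ) * z ^ k) :=
            Finset.sum_le_sum step1
        _ ≤ ∑ j ∈ range (2*M), ∑ k ∈ range (2*M - j),
          ((Nat.centralBinom j : ℝ) * z ^ j) * ((Nat.centralBinom k : ℝ) * z ^ k) := by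
            apply Finset.sum_le_sum_of_subset_of_nonneg
            · exact Finset.range_subset_range.2 (by omega)
            · intro j _ _
              exact Finset.sum_nonneg fun k _ => mul_nonneg (hterm j) (hterm k)
    have e3 : ∑ j ∈ range (2*M), ∑ k ∈ range (2*M - j),
        ((Nat.centralBinom j : ℝ) * z ^ j) * ((Nat.centralBinom k : ℝ) * z ^ k)
        = ∑ m ∈ range (2*M), (4*z) ^ m := by
      rw [← sum_triangle (fun j k => ((Nat.centralBinom j : ℝ) * z ^ j) * ((Nat.centralBinom k : ℝ) * z ^ k)) (2*M)]
      apply Finset.sum_congr rfl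
      intro m _
      have : ∑ j ∈ range (m+1),
          ((Nat.centralBinom j : ℝ) * z ^ j) * ((Nat.centralBinom (m-j) : ℝ) * z ^ (m-j))
          = ∑ j ∈ range (m+1), ((Nat.centralBinom j : ℝ) * (Nat.centralBinom (m-j) : ℝ)) * z ^ m := by
        apply Finset.sum_congr rfl
        intro j hj
        simp only [mem_range] at hj
        have : z ^ j * z ^ (m - j) = z ^ m := by
          rw [← pow_add]
          congr 1
          omega
        calc ((Nat.centralBinom j : ℝ) * z ^ j) * ((Nat.centralBinom (m-j) : ℝ) * z ^ (m-j))
            = ((Nat.centralBinom j : ℝ) * (Nat.centralBinom (m-j) : ℝ)) * (z ^ j * z ^ (m-j)) := by ring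
          _ = _ := by rw [this]
      rw [this, ← Finset.sum_mul]
      have hc : ∑ j ∈ range (m+1), (Nat.centralBinom j : ℝ) * (Nat.centralBinom (m-j) : ℝ)
          = (4:ℝ) ^ m := by
        exact_mod_cast central_conv m
      rw [hc, mul_pow]
    have e4 : ∑ m ∈ range (2*M), (4*z) ^ m ≤ 1 / (1 - 4*z) := by
      have hgeom : (∑ m ∈ range (2*M), (4*z) ^ m) * (1 - 4*z) = 1 - (4*z)^(2*M) := by
        have := geom_sum_mul (4*z) (2*M)
        nlinarith [this]
      rw [le_div_iff₀ h1r, hgeom]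
      have : 0 ≤ (4*z)^(2*M) := pow_nonneg (by linarith) _
      linarith
    calc T ^ 2 ≤ _ := e2
      _ = _ := e3
      _ ≤ _ := e4
  have hs : T ≤ Real.sqrt (1 / (1 - 4*z)) := (Real.le_sqrt hTnn (by positivity)).2 hsq
  calc T ≤ Real.sqrt (1 / (1 - 4*z)) := hs
    _ = 1 / Real.sqrt (1 - 4*z) := by
      rw [one_div, Real.sqrt_inv, one_div]

private lemma pascal_sum (m n : ℕ) (x : ℝ) :
    ∑ k ∈ range (n+1), (Nat.choose (m+1) k : ℝ) * x ^ k
      = ∑ k ∈ range (n+1), (Nat.choose m k : ℝ) * x ^ k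
        + x * ∑ k ∈ range n, (Nat.choose m k : ℝ) * x ^ k := by
  rw [Finset.sum_range_succ' (fun k => (Nat.choose (m+1) k : ℝ) * x ^ k) n]
  rw [Finset.sum_range_succ' (fun k => (Nat.choose m k : ℝ) * x ^ k) n]
  simp only [Nat.choose_succ_succ m]
  push_cast
  rw [Finset.mul_sum]
  rw [Finset.sum_congr rfl (fun k _ => by ring :
    ∀ k ∈ range n, ((Nat.choose m k : ℝ) + (Nat.choose m (k+1) : ℝ)) * x ^ (k+1)
      = (Nat.choose m (k+1) : ℝ) * x ^ (k+1) + x * ((Nat.choose m k : ℝ) * x ^ k))]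
  rw [Finset.sum_add_distrib]
  simp [Nat.choose_zero_right]
  ring

private lemma central_succ_eq (n : ℕ) : Nat.centralBinom (n+1) = 2 * Nat.choose (2*n+1) n := by
  have h1 : Nat.centralBinom (n+1) = Nat.choose (2*n+2) (n+1) := by
    rw [Nat.centralBinom, show 2*(n+1) = 2*n+2 by omega]
  have h2 : Nat.choose (2*n+2) (n+1) = Nat.choose (2*n+1) n + Nat.choose (2*n+1) (n+1) := by
    have := Nat.choose_succ_succ (2*n+1) n
    convert this using 2 <;> omega
  have h3 : Nat.choose (2*n+1) (n+1) = Nat.choose (2*n+1) n := by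
    have := Nat.choose_symm (by omega : n + 1 ≤ 2*n+1)
    have he : 2*n+1 - (n+1) = n := by omega
    rw [he] at this
    exact this.symm
  omega

private lemma key_identity (n : ℕ) (x : ℝ) :
    2 * ∑ k ∈ range (n+1), (Nat.choose (2*n+1) k : ℝ) * x ^ k
      = (1+x)^(2*n+1)
        + (1-x) * ∑ m ∈ range (n+1), (Nat.centralBinom m : ℝ) * x ^ m * (1+x)^(2*(n-m)) := by
  induction n with
  | zero => simp [Nat.centralBinom]; ring
  | succ n ih =>
    set L : ℝ := ∑ k ∈ range (n+1), (Nat.choose (2*n+1) k : ℝ) * x ^ k with hL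
    have hL' : ∑ k ∈ range (n+1), (Nat.choose (2*n+2) k : ℝ) * x ^ k
        = (1+x) * L - (Nat.choose (2*n+1) n : ℝ) * x ^ (n+1) := by
      have hp := pascal_sum (2*n+1) n x
      have hsplit : ∑ k ∈ range n, (Nat.choose (2*n+1) k : ℝ) * x ^ k
          = L - (Nat.choose (2*n+1) n : ℝ) * x ^ n := by
        rw [hL, Finset.sum_range_succ]; ring
      rw [hsplit] at hp
      rw [hp]; ring
    have hrec : ∑ k ∈ range (n+2), (Nat.choose (2*(n+1)+1) k : ℝ) * x ^ k
        = (1+x)^2 * L + (1-x) * (Nat.choose (2*n+1) n : ℝ) * x ^ (n+1) := by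
      have e0 : 2*(n+1)+1 = (2*n+2)+1 := by omega
      rw [e0]
      have hp2 := pascal_sum (2*n+2) (n+1) x
      rw [hp2]
      have e1 : ∑ k ∈ range (n+2), (Nat.choose (2*n+2) k : ℝ) * x ^ k
          = ((1+x) * L - (Nat.choose (2*n+1) n : ℝ) * x ^ (n+1))
            + (Nat.choose (2*n+2) (n+1) : ℝ) * x ^ (n+1) := by
        rw [Finset.sum_range_succ, hL']
      have e2 : (Nat.choose (2*n+2) (n+1) : ℝ) = 2 * (Nat.choose (2*n+1) n : ℝ) := by
        have := central_succ_eq n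
        have h1 : Nat.centralBinom (n+1) = Nat.choose (2*n+2) (n+1) := by
          rw [Nat.centralBinom, show 2*(n+1) = 2*n+2 by omega]
        rw [h1] at this
        exact_mod_cast congrArg (Nat.cast : ℕ → ℝ) this
      rw [e1, e2, hL']
      ring
    have hR : ∑ m ∈ range (n+2), (Nat.centralBinom m : ℝ) * x ^ m * (1+x)^(2*(n+1-m))
        = (1+x)^2 * (∑ m ∈ range (n+1), (Nat.centralBinom m : ℝ) * x ^ m * (1+x)^(2*(n-m)))
          + (Nat.centralBinom (n+1) : ℝ) * x ^ (n+1) := by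
      rw [Finset.sum_range_succ, Finset.mul_sum]
      have : ∀ m ∈ range (n+1), (Nat.centralBinom m : ℝ) * x ^ m * (1+x)^(2*(n+1-m))
          = (1+x)^2 * ((Nat.centralBinom m : ℝ) * x ^ m * (1+x)^(2*(n-m))) := by
        intro m hm
        simp only [mem_range] at hm
        have : 2*(n+1-m) = 2*(n-m) + 2 := by omega
        rw [this, pow_add]
        ring
      rw [Finset.sum_congr rfl this]
      have : n + 1 - (n+1) = 0 := by omega
      rw [this]
      norm_num
    rw [hrec, hR]
    have hcb : (Nat.centralBinom (n+1) : ℝ) = 2 * (Nat.choose (2*n+1) n : ℝ) := by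
      exact_mod_cast congrArg (Nat.cast : ℕ → ℝ) (central_succ_eq n)
    rw [hcb]
    have hpow : (1+x)^(2*(n+1)+1) = (1+x)^2 * (1+x)^(2*n+1) := by
      rw [← pow_add]; congr 1; omega
    rw [hpow]
    nlinarith [ih]

lemma sqrt_w_pos (hp0 : 0 < p) (hp1 : p < 1) {y : ℝ} (hy : 0 < y) :
    1 - p < Real.sqrt ((1 - p) ^ 2 + 4 * p * y) := by
  have h1 : (1:ℝ) - p = Real.sqrt ((1-p)^2) := by
    rw [Real.sqrt_sq (by linarith)]
  rw [h1]
  apply Real.sqrt_lt_sqrt (by positivity)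
  nlinarith

lemma qp_pos (hp0 : 0 < p) (hp1 : p < 1) {y : ℝ} (hy : 0 < y) : 0 < qp p y := by
  unfold qp
  have := sqrt_w_pos hp0 hp1 hy
  apply _root_.div_pos (by linarith) (by linarith)

lemma qp_le_one (hp0 : 0 < p) (hp1 : p < 1) {y : ℝ} (hy : y ≤ 1) : qp p y ≤ 1 := by
  unfold qp
  rw [div_le_one (by linarith)]
  have h2 : Real.sqrt ((1 - p) ^ 2 + 4 * p * y) ≤ 1 + p := by
    have : (1:ℝ) + p = Real.sqrt ((1+p)^2) := by rw [Real.sqrt_sq (by linarith)]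
    rw [this]
    apply Real.sqrt_le_sqrt
    nlinarith
  linarith

lemma le_qp (hp0 : 0 < p) (hp1 : p < 1) {y : ℝ} (hy0 : 0 < y) (hy1 : y ≤ 1) : y ≤ qp p y := by
  unfold qp
  rw [le_div_iff₀ (by linarith)]
  have h : 2*p*y + (1-p) ≤ Real.sqrt ((1 - p) ^ 2 + 4 * p * y) := by
    apply (Real.le_sqrt (by nlinarith) (by nlinarith)).2
    nlinarith [mul_nonneg (mul_nonneg (le_of_lt hp0) (le_of_lt hp0))
      (mul_nonneg (le_of_lt hy0) (by linarith : (0:ℝ) ≤ 1 - y))]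
  linarith

lemma qp_one (hp0 : 0 < p) (hp1 : p < 1) : qp p 1 = 1 := by
  unfold qp
  have : (1 - p) ^ 2 + 4 * p * 1 = (1+p)^2 := by ring
  rw [this, Real.sqrt_sq (by linarith)]
  field_simp
  ring

lemma h_hasDeriv (hp0 : 0 < p) (hp1 : p < 1) {t : ℝ} (ht1 : t < 1) :
    HasDerivAt (fun t => -Real.log (qp p (1 - t)))
      ((Real.sqrt ((1-p)^2 + 4*p*(1-t)) + (1-p)) /
        (2 * Real.sqrt ((1-p)^2 + 4*p*(1-t)) * (1-t))) t := by
  have h1t : 0 < 1 - t := by linarith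
  set s := Real.sqrt ((1-p)^2 + 4*p*(1-t)) with hs
  have hwpos : 0 < (1-p)^2 + 4*p*(1-t) := by nlinarith
  have hspos : 0 < s := Real.sqrt_pos.2 hwpos
  have hs2 : s^2 = (1-p)^2 + 4*p*(1-t) := Real.sq_sqrt (le_of_lt hwpos)
  have hsgt : 1 - p < s := sqrt_w_pos hp0 hp1 h1t
  have hqpos : 0 < qp p (1-t) := qp_pos hp0 hp1 h1t
  -- derivative of inner w
  have hw : HasDerivAt (fun u : ℝ => (1-p)^2 + 4*p*(1-u)) (-(4*p)) t := by
    have h0 : HasDerivAt (fun u : ℝ => 1 - u) (-1) t := (hasDerivAt_id t).const_sub 1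
    have h1 : HasDerivAt (fun u : ℝ => 4*p*(1-u)) (4*p*(-1)) t := h0.const_mul (4*p)
    have h2 := h1.const_add ((1-p)^2)
    refine h2.congr_deriv ?_
    ring
  have hsqrt : HasDerivAt (fun u : ℝ => Real.sqrt ((1-p)^2 + 4*p*(1-u)))
      (1 / (2 * s) * (-(4*p))) t := by
    exact (Real.hasDerivAt_sqrt (ne_of_gt hwpos)).comp t hw
  have hq : HasDerivAt (fun u : ℝ => qp p (1-u))
      ((1 / (2 * s) * (-(4*p)) ) / (2*p)) t := by
    unfold qp
    exact (hsqrt.sub_const (1-p)).div_const (2*p)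
  have hlog : HasDerivAt (fun u : ℝ => Real.log (qp p (1-u)))
      (((1 / (2 * s) * (-(4*p))) / (2*p)) / qp p (1-t)) t := hq.log (ne_of_gt hqpos)
  have := hlog.neg
  refine this.congr_deriv ?_
  unfold qp
  rw [← hs]
  have hden : s - (1-p) ≠ 0 := by linarith
  field_simp
  linear_combination (-1) * hs2

/-! ### The coefficients d -/

noncomputable def dC (p : ℝ) (n : ℕ) : ℝ :=
  (1 + ((1-p)/(1+p)) * ∑ m ∈ range (n+1), (Nat.centralBinom m : ℝ) * (p/(1+p)^2) ^ m) / 2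

lemma aCoeff_eq_dC {p : ℝ} (hp0 : 0 < p) (hp1 : p < 1) (n : ℕ) :
    ((n:ℝ)+1) * aCoeff p (n+1) = dC p n := by
  have hP : (0:ℝ) < 1 + p := by linarith
  have hPne : (1:ℝ) + p ≠ 0 := ne_of_gt hP
  have hexp : 2*(n+1) - 1 = 2*n+1 := by omega
  set Sm := ∑ m ∈ range (n+1), (Nat.centralBinom m : ℝ) * (p/(1+p)^2) ^ m with hSm
  have hB : (1+p)^(2*n) * Sm
      = ∑ m ∈ range (n+1), (Nat.centralBinom m : ℝ) * p ^ m * (1+p)^(2*(n-m)) := by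
    rw [hSm, Finset.mul_sum]
    apply Finset.sum_congr rfl
    intro m hm
    simp only [mem_range] at hm
    have hmn : m ≤ n := by omega
    have h1 : (p/(1+p)^2) ^ m = p^m / (1+p)^(2*m) := by
      rw [div_pow, ← pow_mul]
    have h2 : (1+p)^(2*(n-m)) = (1+p)^(2*n) / (1+p)^(2*m) := by
      rw [show 2*(n-m) = 2*n - 2*m by omega, pow_sub₀ _ hPne (by omega)]
      rw [div_eq_mul_inv]
    rw [h1, h2]
    field_simp
  have hkey := key_identity n p
  rw [← hB] at hkey
  have haC : aCoeff p (n+1)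
      = (∑ k ∈ range (n+1), (Nat.choose (2*n+1) k : ℝ) * p ^ k)
        / (((n:ℝ)+1) * (1+p)^(2*n+1)) := by
    unfold aCoeff
    rw [hexp]
    push_cast
    ring
  rw [haC]
  have hnne : ((n:ℝ)+1) ≠ 0 := by positivity
  have hPpow : ((1:ℝ)+p)^(2*n+1) ≠ 0 := pow_ne_zero _ hPne
  rw [dC, ← hSm]
  field_simp
  rw [show ((1:ℝ)+p)^(2*n+1) = (1+p)^(2*n) * (1+p) by rw [pow_succ]] at hkey ⊢
  linear_combination ((1+p)) * hkey

/-! ### exchange lemma -/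

private lemma exchange (c : ℕ → ℝ) (t : ℝ) (N : ℕ) :
    (1-t) * ∑ n ∈ range N, (∑ m ∈ range (n+1), c m) * t^n
      = ∑ m ∈ range N, c m * (t^m - t^N) := by
  induction N with
  | zero => simp
  | succ N ih =>
    rw [Finset.sum_range_succ, mul_add, ih,
      Finset.sum_range_succ (fun m => c m * (t^m - t^(N+1)))]
    have e : ∀ m ∈ range N, c m * (t^m - t^(N+1))
        = c m * (t^m - t^N) + c m * t^N * (1 - t) := by
      intro m _
      rw [pow_succ]
      ring
    rw [Finset.sum_congr rfl e, Finset.sum_add_distrib]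
    have e2 : ∑ m ∈ range N, c m * t^N * (1-t) = (∑ m ∈ range N, c m) * t^N * (1-t) := by
      rw [Finset.sum_mul, Finset.sum_mul]
    rw [e2, Finset.sum_range_succ c, pow_succ]
    ring

/-! ### partial sum bound -/

lemma dsum_le {p : ℝ} (hp0 : 0 < p) (hp1 : p < 1) {t : ℝ} (ht0 : 0 ≤ t) (ht1 : t < 1) (N : ℕ) :
    ∑ n ∈ range N, dC p n * t^n
      ≤ (Real.sqrt ((1-p)^2 + 4*p*(1-t)) + (1-p))
          / (2 * Real.sqrt ((1-p)^2 + 4*p*(1-t)) * (1-t)) := by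
  have hP : (0:ℝ) < 1 + p := by linarith
  have h1t : 0 < 1 - t := by linarith
  set s := Real.sqrt ((1-p)^2 + 4*p*(1-t)) with hs
  have hwpos : 0 < (1-p)^2 + 4*p*(1-t) := by nlinarith
  have hspos : 0 < s := Real.sqrt_pos.2 hwpos
  set κ := p/(1+p)^2 with hκ
  have hκ0 : 0 < κ := by positivity
  have hP2 : (0:ℝ) < (1+p)^2 := by positivity
  have h4κ : 4*κ < 1 := by
    rw [hκ, show (4:ℝ)*(p/(1+p)^2) = (4*p)/(1+p)^2 by ring, div_lt_one hP2]
    nlinarith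
  have hz0 : 0 ≤ κ*t := mul_nonneg hκ0.le ht0
  have hz4 : 4*(κ*t) < 1 := by
    nlinarith [mul_nonneg (by linarith : (0:ℝ) ≤ 4*κ) h1t.le]
  have hTle := centralBinom_partial_le (κ*t) hz0 hz4 N
  have harg : (1-p)^2 + 4*p*(1-t) = (1+p)^2 * (1 - 4*(κ*t)) := by
    rw [hκ]
    field_simp
    ring
  have hs_sqrt : Real.sqrt (1 - 4*(κ*t)) = s / (1+p) := by
    rw [eq_div_iff hP.ne']
    rw [hs, harg, Real.sqrt_mul (by positivity) _, Real.sqrt_sq hP.le]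
    ring
  have hsqrt_pos : 0 < Real.sqrt (1 - 4*(κ*t)) := Real.sqrt_pos.2 (by linarith)
  have hA1 : ∑ n ∈ range N, t^n ≤ 1/(1-t) := by
    rw [le_div_iff₀ h1t]
    nlinarith [geom_sum_mul t N, pow_nonneg ht0 N]
  have hA2 : ∑ n ∈ range N, (∑ m ∈ range (n+1), (Nat.centralBinom m : ℝ) * κ^m) * t^n
      ≤ ((1+p)/s) / (1-t) := by
    rw [le_div_iff₀ h1t, mul_comm]
    rw [exchange (fun m => (Nat.centralBinom m : ℝ) * κ^m) t N]
    have step1 : ∑ m ∈ range N, ((Nat.centralBinom m : ℝ) * κ^m) * (t^m - t^N)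
        ≤ ∑ m ∈ range N, (Nat.centralBinom m : ℝ) * (κ*t)^m := by
      apply Finset.sum_le_sum
      intro m _
      have h1 : (0:ℝ) ≤ (Nat.centralBinom m : ℝ) * κ^m :=
        mul_nonneg (Nat.cast_nonneg _) (pow_nonneg hκ0.le m)
      have h2 : t^m - t^N ≤ t^m := by
        have : (0:ℝ) ≤ t^N := pow_nonneg ht0 N
        linarith
      calc ((Nat.centralBinom m : ℝ) * κ^m) * (t^m - t^N)
          ≤ ((Nat.centralBinom m : ℝ) * κ^m) * t^m := mul_le_mul_of_nonneg_left h2 h1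
        _ = (Nat.centralBinom m : ℝ) * (κ*t)^m := by rw [mul_pow]; ring
    calc ∑ m ∈ range N, ((Nat.centralBinom m : ℝ) * κ^m) * (t^m - t^N)
        ≤ ∑ m ∈ range N, (Nat.centralBinom m : ℝ) * (κ*t)^m := step1
      _ ≤ 1 / Real.sqrt (1 - 4*(κ*t)) := hTle
      _ = (1+p)/s := by rw [hs_sqrt, one_div_div]
  have hdec : ∑ n ∈ range N, dC p n * t^n
      = (∑ n ∈ range N, t^n)/2
        + ((1-p)/(2*(1+p)))
          * ∑ n ∈ range N, (∑ m ∈ range (n+1), (Nat.centralBinom m : ℝ) * κ^m) * t^n := by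
    rw [Finset.sum_div, Finset.mul_sum, ← Finset.sum_add_distrib]
    apply Finset.sum_congr rfl
    intro n _
    rw [dC, ← hκ]
    field_simp
  rw [hdec]
  have hcoef : (0:ℝ) ≤ (1-p)/(2*(1+p)) := div_nonneg (by linarith) (by linarith)
  have hb2 : ((1-p)/(2*(1+p)))
        * ∑ n ∈ range N, (∑ m ∈ range (n+1), (Nat.centralBinom m : ℝ) * κ^m) * t^n
      ≤ ((1-p)/(2*(1+p))) * (((1+p)/s) / (1-t)) := mul_le_mul_of_nonneg_left hA2 hcoef
  have hb1 : (∑ n ∈ range N, t^n)/2 ≤ (1/(1-t))/2 := by linarith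
  have hfinal : (1/(1-t))/2 + ((1-p)/(2*(1+p))) * (((1+p)/s) / (1-t))
      = (s + (1-p)) / (2 * s * (1-t)) := by
    field_simp
  linarith

/-! ### Lemma A : partial sums bounded by -log q -/

lemma aCoeff_nonneg {p : ℝ} (hp0 : 0 < p) (hp1 : p < 1) (i : ℕ) : 0 ≤ aCoeff p i := by
  unfold aCoeff
  apply div_nonneg
  · apply Finset.sum_nonneg
    intro k _
    exact mul_nonneg (Nat.cast_nonneg _) (pow_nonneg hp0.le k)
  · positivity

lemma sumA_le {p : ℝ} (hp0 : 0 < p) (hp1 : p < 1) (N : ℕ) {x : ℝ}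
    (hx0 : 0 ≤ x) (hx1 : x < 1) :
    ∑ i ∈ Finset.Icc 1 N, aCoeff p i * x ^ i ≤ - Real.log (qp p (1 - x)) := by
  set F : ℝ → ℝ := fun t => -Real.log (qp p (1 - t)) - ∑ i ∈ Finset.Icc 1 N, aCoeff p i * t ^ i
    with hF
  have hSd : ∀ t : ℝ, HasDerivAt (fun u => ∑ i ∈ Finset.Icc 1 N, aCoeff p i * u ^ i)
      (∑ n ∈ range N, dC p n * t^n) t := by
    intro t
    have h1 : HasDerivAt (fun u => ∑ i ∈ Finset.Icc 1 N, aCoeff p i * u ^ i)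
        (∑ i ∈ Finset.Icc 1 N, aCoeff p i * ((i:ℝ) * t ^ (i-1))) t := by
      apply HasDerivAt.fun_sum
      intro i _
      exact (hasDerivAt_pow i t).const_mul (aCoeff p i)
    have h2 : ∑ i ∈ Finset.Icc 1 N, aCoeff p i * ((i:ℝ) * t ^ (i-1))
        = ∑ n ∈ range N, dC p n * t^n := by
      rw [← Finset.Ico_add_one_right_eq_Icc, Finset.sum_Ico_eq_sum_range]
      simp only [show N+1-1 = N from rfl]
      apply Finset.sum_congr rfl
      intro n _
      have e1 : 1 + n - 1 = n := by omega
      rw [e1]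
      have e2 : aCoeff p (1+n) * (((1+n : ℕ):ℝ) * t^n) = (((n:ℝ))+1) * aCoeff p (n+1) * t^n := by
        push_cast
        rw [show 1+n = n+1 by omega]
        ring
      rw [e2, aCoeff_eq_dC hp0 hp1 n]
    rw [← h2]
    exact h1
  have hFd : ∀ t : ℝ, 0 ≤ t → t < 1 → HasDerivAt F
      ((Real.sqrt ((1-p)^2 + 4*p*(1-t)) + (1-p))
          / (2 * Real.sqrt ((1-p)^2 + 4*p*(1-t)) * (1-t))
        - ∑ n ∈ range N, dC p n * t^n) t := by
    intro t _ ht1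
    exact (h_hasDeriv hp0 hp1 ht1).sub (hSd t)
  have hmono : MonotoneOn F (Set.Icc 0 x) := by
    apply monotoneOn_of_deriv_nonneg (convex_Icc 0 x)
    · intro t ht
      simp only [Set.mem_Icc] at ht
      exact (hFd t ht.1 (lt_of_le_of_lt ht.2 hx1)).continuousAt.continuousWithinAt
    · intro t ht
      rw [interior_Icc] at ht
      simp only [Set.mem_Ioo] at ht
      exact ((hFd t ht.1.le (lt_of_lt_of_le ht.2 (le_of_lt hx1))).differentiableAt).differentiableWithinAt
    · intro t ht
      rw [interior_Icc] at ht
      simp only [Set.mem_Ioo] at ht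
      have ht1 : t < 1 := lt_of_lt_of_le ht.2 (le_of_lt hx1)
      rw [(hFd t ht.1.le ht1).deriv]
      have := dsum_le hp0 hp1 ht.1.le ht1 N
      linarith
  have hF0 : F 0 = 0 := by
    rw [hF]
    simp only
    have h1 : qp p (1 - (0:ℝ)) = 1 := by
      rw [show (1:ℝ) - 0 = 1 by ring]
      exact qp_one hp0 hp1
    have h2 : ∑ i ∈ Finset.Icc 1 N, aCoeff p i * (0:ℝ) ^ i = 0 := by
      apply Finset.sum_eq_zero
      intro i hi
      simp only [Finset.mem_Icc] at hi
      rw [zero_pow (by omega : i ≠ 0), mul_zero]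
    rw [h1, h2]
    simp
  have hle : F 0 ≤ F x := hmono (Set.left_mem_Icc.2 hx0) (Set.mem_Icc.2 ⟨hx0, le_refl x⟩) hx0
  rw [hF0] at hle
  have : 0 ≤ -Real.log (qp p (1 - x)) - ∑ i ∈ Finset.Icc 1 N, aCoeff p i * x ^ i := hle
  linarith

end Stmt13Aux

open Stmt13Aux in
theorem stmt13 (p : ℝ) (hp0 : 0 < p) (hp1 : p < 1) (μ : ℝ) (hμ : 0 < μ)
    (N : ℕ) (hN : 1 ≤ N) :
    ∀ β : ℝ, 0 < β → β ≤ 1 → ∀ y : ℝ, 0 < y → y ≤ 1 →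
      Real.exp (-(β * (μ + 1))) * (qp p y) ^ β ≤
        Real.exp (-(β * (μ + Gpart p N + 1) * rhoN p μ N (1 - y))) ∧
      Real.exp (-(β * (μ + 1))) * y ^ β ≤
        Real.exp (-(β * (μ + 1))) * (qp p y) ^ β := by
  intro β hβ0 hβ1 y hy0 hy1
  have hq0 : 0 < qp p y := qp_pos hp0 hp1 hy0
  have hyq : y ≤ qp p y := le_qp hp0 hp1 hy0 hy1
  constructor
  · have hx0 : (0:ℝ) ≤ 1 - y := by linarith
    have hx1 : 1 - y < 1 := by linarith
    have hA : ∑ i ∈ Finset.Icc 1 N, aCoeff p i * (1-y) ^ i ≤ - Real.log (qp p y) := by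
      have := sumA_le hp0 hp1 N hx0 hx1
      rw [show (1:ℝ) - (1-y) = y by ring] at this
      exact this
    have hpow : (1-y)^N ≤ 1 := pow_le_one₀ hx0 (by linarith)
    have hG : 0 ≤ Gpart p N := Finset.sum_nonneg fun i _ => aCoeff_nonneg hp0 hp1 i
    have hGpos : 0 < μ + Gpart p N + 1 := by linarith
    have hrho : (μ + Gpart p N + 1) * rhoN p μ N (1-y)
        = μ + (∑ i ∈ Finset.Icc 1 N, aCoeff p i * (1-y) ^ i) + (1-y)^N := by
      rw [rhoN]
      field_simp
    rw [Real.rpow_def_of_pos hq0, ← Real.exp_add]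
    apply Real.exp_le_exp.2
    have hV : (μ + Gpart p N + 1) * rhoN p μ N (1-y) ≤ (μ + 1) - Real.log (qp p y) := by
      rw [hrho]
      linarith
    have hβV := mul_le_mul_of_nonneg_left hV hβ0.le
    rw [mul_sub] at hβV
    nlinarith [hβV]
  · apply mul_le_mul_of_nonneg_left
    · exact Real.rpow_le_rpow hy0.le hyq hβ0.le
    · exact (Real.exp_pos _).le
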